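/- Let Γ be a signed graph on n vertices containing a negative cycle C of length r − 1 (r ≥ 6) having exactly one negative edge v₁v₂, and suppose Γ contains no negative cycle of length r. Then every vertex outside C is non-adjacent to at least one of each pair of consecutive cycle vertices other than the pair {v₁, v₂}; consequently each vertex outside C has at most ⌈(r−1)/2⌉ neighbors on C, and hence the number of edges between V(C) and its complement is at most ⌈(r−1)/2⌉·(n − r + 1). -/

import Mathlib

/-- The sign of a walk in a signed graph: the product of the edge signs along the walk. -/
def walkSign {V : Type*} {G : SimpleGraph V} (σ : V → V → ℝ) {u v : V} (p : G.Walk u v) : ℝ :=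
  (p.darts.map fun d => σ d.toProd.1 d.toProd.2).prod

open SimpleGraph

variable {V : Type*} {G : SimpleGraph V}

lemma walkSign_nil (σ : V → V → ℝ) {u : V} : walkSign σ (Walk.nil : G.Walk u u) = 1 := by
  simp [walkSign]

lemma walkSign_cons (σ : V → V → ℝ) {u v x : V} (h : G.Adj u v) (p : G.Walk v x) :
    walkSign σ (Walk.cons h p) = σ u v * walkSign σ p := by
  simp [walkSign]

lemma walkSign_copy (σ : V → V → ℝ) {u v u' v' : V} (p : G.Walk u v) (hu : u = u') (hv : v = v') :
    walkSign σ (p.copy hu hv) = walkSign σ p := by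
  simp [walkSign]

lemma walkSign_append (σ : V → V → ℝ) {u v x : V} (p : G.Walk u v) (q : G.Walk v x) :
    walkSign σ (p.append q) = walkSign σ p * walkSign σ q := by
  simp [walkSign]

def cwalk {m : ℕ} (c : ZMod m → V) (hcyc : ∀ k, G.Adj (c k) (c (k + 1))) :
    (j : ZMod m) → (s : ℕ) → G.Walk (c j) (c (j + s))
  | j, 0 => Walk.nil.copy rfl (congrArg c (by push_cast; ring))
  | j, (s+1) => (Walk.cons (hcyc j) (cwalk c hcyc (j+1) s)).copy rfl
      (congrArg c (by push_cast; ring))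

lemma cwalk_length {m : ℕ} (c : ZMod m → V) (hcyc : ∀ k, G.Adj (c k) (c (k + 1))) :
    ∀ (j : ZMod m) (s : ℕ), (cwalk c hcyc j s).length = s
  | j, 0 => by simp [cwalk]
  | j, (s+1) => by simp [cwalk, cwalk_length c hcyc (j+1) s]

lemma cwalk_support {m : ℕ} (c : ZMod m → V) (hcyc : ∀ k, G.Adj (c k) (c (k + 1))) :
    ∀ (j : ZMod m) (s : ℕ),
      (cwalk c hcyc j s).support = (List.range (s+1)).map (fun i : ℕ => c (j + i))
  | j, 0 => by simp [cwalk, List.range_succ]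
  | j, (s+1) => by
    rw [cwalk]
    rw [Walk.support_copy, Walk.support_cons, cwalk_support c hcyc (j+1) s]
    conv_rhs => rw [List.range_succ_eq_map]
    rw [List.map_cons, List.map_map]
    congr 1
    · simp
    · congr 1
      funext i
      simp only [Function.comp_apply]
      congr 1
      push_cast
      ring

lemma cwalk_sign {m : ℕ} (σ : V → V → ℝ) (c : ZMod m → V)
    (hcyc : ∀ k, G.Adj (c k) (c (k + 1))) :
    ∀ (j : ZMod m) (s : ℕ),
      walkSign σ (cwalk c hcyc j s) = ∏ i ∈ Finset.range s, σ (c (j + i)) (c (j + i + 1))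
  | j, 0 => by simp [cwalk, walkSign]
  | j, (s+1) => by
    rw [cwalk, walkSign_copy, walkSign_cons, cwalk_sign σ c hcyc (j+1) s,
      Finset.prod_range_succ']
    rw [mul_comm]
    congr 1
    · apply Finset.prod_congr rfl
      intro i _
      push_cast
      ring_nf
    · push_cast
      ring_nf

/-- Let `Γ` be a signed graph on `n` vertices containing a negative cycle `C` of length
`r − 1` (with `r ≥ 6`), whose only negative edge is `v₁v₂ = (c 0)(c 1)`, and suppose `Γ`
contains no negative cycle of length `r`. Then: every vertex outside `C` is non-adjacent to
at least one of each pair of consecutive cycle vertices other than `{v₁, v₂}`; consequently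
every vertex outside `C` has at most `⌈(r−1)/2⌉ = r/2` neighbours on `C`; and hence the number
of edges between `V(C)` and its complement is at most `⌈(r−1)/2⌉·(n − r + 1)`. -/
theorem stmt16 {n r : ℕ} (hr : 6 ≤ r) [NeZero (r - 1)]
    (G : SimpleGraph (Fin n)) [DecidableRel G.Adj]
    (σ : Fin n → Fin n → ℝ)
    (hsym : ∀ i j, σ i j = σ j i)
    (hval : ∀ i j, G.Adj i j → σ i j = 1 ∨ σ i j = -1)
    (c : ZMod (r - 1) → Fin n) (hinj : Function.Injective c)
    (hcyc : ∀ k, G.Adj (c k) (c (k + 1)))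
    (hneg : σ (c 0) (c 1) = -1)
    (huniq : ∀ i j, G.Adj i j → σ i j = -1 → ({i, j} : Set (Fin n)) = {c 0, c 1})
    (hno : ¬ ∃ (v : Fin n) (p : G.Walk v v), p.IsCycle ∧ p.length = r ∧ walkSign σ p = -1) :
    (∀ w, w ∉ Set.range c → ∀ k, ({c k, c (k + 1)} : Set (Fin n)) ≠ {c 0, c 1} →
        ¬(G.Adj w (c k) ∧ G.Adj w (c (k + 1)))) ∧
    (∀ w, w ∉ Set.range c →
        (Finset.univ.filter fun k : ZMod (r - 1) => G.Adj w (c k)).card ≤ r / 2) ∧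
    (Finset.univ.filter fun p : Fin n × ZMod (r - 1) =>
        (∀ k, p.1 ≠ c k) ∧ G.Adj p.1 (c p.2)).card ≤ r / 2 * (n + 1 - r) := by
  have hm5 : 5 ≤ r - 1 := by omega
  -- cast injectivity below the modulus
  have castinj : ∀ a b : ℕ, a < r - 1 → b < r - 1 → (a : ZMod (r-1)) = (b : ZMod (r-1)) → a = b := by
    intro a b ha hb h
    rw [← ZMod.val_cast_of_lt ha, ← ZMod.val_cast_of_lt hb, h]
  have one_ne : (1 : ZMod (r-1)) ≠ 0 := by
    intro h
    have := castinj 1 0 (by omega) (by omega) (by push_cast; exact h)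
    omega
  have two_ne : (2 : ZMod (r-1)) ≠ 0 := by
    intro h
    have := castinj 2 0 (by omega) (by omega) (by push_cast; exact h)
    omega
  have two_ne_one : (2 : ZMod (r-1)) ≠ 1 := by
    intro h
    have := castinj 2 1 (by omega) (by omega) (by push_cast; exact h)
    omega
  -- a consecutive pair equals {c 0, c 1} only for k = 0
  have hpair : ∀ j : ZMod (r-1), ({c j, c (j+1)} : Set (Fin n)) = {c 0, c 1} → j = 0 := by
    intro j hj
    have h1 : c j ∈ ({c 0, c 1} : Set (Fin n)) := by
      rw [← hj]; exact Set.mem_insert _ _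
    rcases h1 with h1 | h1
    · exact hinj h1
    · exfalso
      have hj1 : j = 1 := hinj h1
      subst hj1
      have h2 : c (1+1) ∈ ({c 0, c 1} : Set (Fin n)) := by
        rw [← hj]; exact Set.mem_insert_of_mem _ rfl
      rcases h2 with h2 | h2
      · exact two_ne (by rw [← hinj h2]; norm_num)
      · exact two_ne_one (by rw [← hinj h2]; norm_num)
  -- all cycle edges other than (c 0)(c 1) are positive
  have sigma_pos : ∀ j : ZMod (r-1), j ≠ 0 → σ (c j) (c (j+1)) = 1 := by
    intro j hj
    rcases hval _ _ (hcyc j) with h | h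
    · exact h
    · exact absurd (hpair j (huniq _ _ (hcyc j) h)) hj
  -- edges touching a vertex outside the cycle are positive
  have sigma_w : ∀ w x, w ∉ Set.range c → G.Adj w x → σ w x = 1 := by
    intro w x hw hadj
    rcases hval _ _ hadj with h | h
    · exact h
    · exfalso
      have := huniq _ _ hadj h
      have hmem : w ∈ ({c 0, c 1} : Set (Fin n)) := by
        rw [← this]; exact Set.mem_insert _ _
      rcases hmem with h' | h' <;> exact hw ⟨_, h'.symm⟩
  have hr2 : ((r-2 : ℕ) : ZMod (r-1)) = -1 := by
    have h0 : ((r-2 : ℕ) : ZMod (r-1)) + 1 = 0 := by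
      have h1 : (((r-2)+1 : ℕ) : ZMod (r-1)) = 0 := by
        rw [show (r-2)+1 = r-1 from by omega]; exact ZMod.natCast_self _
      push_cast at h1
      exact h1
    exact eq_neg_of_add_eq_zero_left h0
  have hcastval : ∀ x : ZMod (r-1), ((x.val : ℕ) : ZMod (r-1)) = x :=
    fun x => ZMod.natCast_rightInverse x
  have part1 : ∀ w, w ∉ Set.range c → ∀ k, ({c k, c (k + 1)} : Set (Fin n)) ≠ {c 0, c 1} →
      ¬(G.Adj w (c k) ∧ G.Adj w (c (k + 1))) := by
    intro w hw k hk ⟨h2, h1⟩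
    have hk0 : k ≠ 0 := by rintro rfl; exact hk (by norm_num)
    -- the endpoint identity
    have hend : c ((k+1) + ((r-2 : ℕ) : ZMod (r-1))) = c k := by
      congr 1; rw [hr2]; ring
    set q1 : G.Walk (c (k+1)) (c k) := (cwalk c hcyc (k+1) (r-2)).copy rfl hend with hq1
    have hq1supp : q1.support = (List.range (r-1)).map (fun i : ℕ => c (k+1+i)) := by
      rw [hq1, Walk.support_copy, cwalk_support]
      congr 2
      omega
    have hwnot : w ∉ q1.support := by
      rw [hq1supp]
      intro h
      rcases List.mem_map.mp h with ⟨i, _, hi⟩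
      exact hw ⟨_, hi⟩
    have hq1nd : q1.support.Nodup := by
      rw [hq1supp]
      refine List.Nodup.map_on ?_ List.nodup_range
      intro x hx y hy hxy
      have hx' : x < r - 1 := List.mem_range.mp hx
      have hy' : y < r - 1 := List.mem_range.mp hy
      have := hinj hxy
      have : (x : ZMod (r-1)) = y := by
        have h := add_left_cancel this
        exact h
      exact castinj x y hx' hy' this
    set q : G.Walk (c (k+1)) w := q1.append (Walk.cons h2.symm Walk.nil) with hq
    have hqpath : q.IsPath := by
      rw [Walk.isPath_def, hq, Walk.support_append]
      simp only [Walk.support_cons, Walk.support_nil, List.tail_cons]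
      rw [List.nodup_append]
      exact ⟨hq1nd, List.nodup_singleton w, by simpa using fun a ha (hab : a = w) => hwnot (hab ▸ ha)⟩
    have hedge : s(w, c (k+1)) ∉ q.edges := by
      rw [hq, Walk.edges_append]
      simp only [Walk.edges_cons, Walk.edges_nil, List.mem_append, List.mem_singleton]
      rintro (h | h)
      · exact hwnot (Walk.fst_mem_support_of_mem_edges q1 h)
      · rw [Sym2.eq_iff] at h
        rcases h with ⟨h', _⟩ | ⟨_, h'⟩
        · exact hw ⟨_, h'.symm⟩
        · have := hinj h'
          exact one_ne (by linear_combination this)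
    set p : G.Walk w w := Walk.cons h1 q with hp
    have hcycle : p.IsCycle := (Walk.cons_isCycle_iff q h1).mpr ⟨hqpath, hedge⟩
    have hlen : p.length = r := by
      rw [hp, Walk.length_cons, hq, Walk.length_append, hq1, Walk.length_copy,
        cwalk_length, Walk.length_cons, Walk.length_nil]
      omega
    have hsign : walkSign σ p = -1 := by
      rw [hp, walkSign_cons, hq, walkSign_append, hq1, walkSign_copy, walkSign_cons,
        walkSign_nil, cwalk_sign]
      rw [sigma_w w (c (k+1)) hw h1, hsym (c k) w, sigma_w w (c k) hw h2]
      have hprod : ∏ i ∈ Finset.range (r-2), σ (c (k+1+i)) (c (k+1+i+1)) = -1 := by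
        set i0 : ℕ := (-(k+1) : ZMod (r-1)).val with hi0
        have hi0cast : ((i0 : ℕ) : ZMod (r-1)) = -(k+1) := ZMod.natCast_rightInverse _
        have hi0lt : i0 < r - 1 := ZMod.val_lt _
        have hi0ne : i0 ≠ r - 2 := by
          intro h
          have : (-(k+1) : ZMod (r-1)) = -1 := by
            rw [← hi0cast, h, hr2]
          have : k = 0 := by linear_combination -this
          exact hk0 this
        have hi0mem : i0 ∈ Finset.range (r-2) := Finset.mem_range.mpr (by omega)
        rw [Finset.prod_eq_single i0]
        · have e0 : k + 1 + (i0 : ZMod (r-1)) = 0 := by rw [hi0cast]; ring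
          rw [e0]
          rw [show (0 : ZMod (r-1)) + 1 = 1 by ring]
          exact hneg
        · intro b hb hbne
          apply sigma_pos
          intro hb0
          apply hbne
          have : (b : ZMod (r-1)) = -(k+1) := by linear_combination hb0
          rw [← hi0cast] at this
          exact castinj b i0 (by have := Finset.mem_range.mp hb; omega) hi0lt this
        · intro h; exact absurd hi0mem h
      rw [hprod]
      ring
    exact hno ⟨w, p, hcycle, hlen, hsign⟩
  have part2 : ∀ w, w ∉ Set.range c →
      (Finset.univ.filter fun k : ZMod (r - 1) => G.Adj w (c k)).card ≤ r / 2 := by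
    intro w hw
    set S := Finset.univ.filter (fun k : ZMod (r - 1) => G.Adj w (c k)) with hS
    have hcons : ∀ k : ZMod (r-1), k ≠ 0 → ¬(k ∈ S ∧ (k+1) ∈ S) := by
      rintro k hk ⟨ha, hb⟩
      refine part1 w hw k (fun hEq => hk (hpair k hEq))
        ⟨(Finset.mem_filter.mp ha).2, (Finset.mem_filter.mp hb).2⟩
    set P : ZMod (r-1) → ℕ := fun x => if x = 0 then r - 2 else x.val - 1 with hP
    have hPle : ∀ x : ZMod (r-1), P x ≤ r - 2 := by
      intro x; rw [hP]; dsimp only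
      split
      · exact le_refl _
      · have := ZMod.val_lt x; omega
    have hPne : ∀ x : ZMod (r-1), x ≠ 0 → P x ≤ r - 3 := by
      intro x hx; simp only [hP, if_neg hx]; have := ZMod.val_lt x; omega
    have hPval : ∀ x : ZMod (r-1), x ≠ 0 → P x = x.val - 1 := by
      intro x hx; simp [hP, hx]
    have hP0 : P 0 = r - 2 := by simp [hP]
    have hvalpos : ∀ x : ZMod (r-1), x ≠ 0 → 1 ≤ x.val := by
      intro x hx
      by_contra h
      exact hx (by rw [← hcastval x, Nat.eq_zero_of_not_pos h]; simp)
    have key : ∀ x y : ZMod (r-1), x ∈ S → y ∈ S → P x + 1 = P y → False := by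
      intro x y hx hy hxy
      by_cases hy0 : y = 0
      · subst hy0
        rw [hP0] at hxy
        have hx0 : x ≠ 0 := by
          rintro rfl; rw [hP0] at hxy; omega
        have hxval : x.val = r - 2 := by
          have := hPval x hx0; have := hvalpos x hx0; omega
        have hx1 : x + 1 = 0 := by
          rw [← hcastval x, hxval, hr2]; ring
        exact hcons x hx0 ⟨hx, hx1 ▸ hy⟩
      · have hx0 : x ≠ 0 := by
          rintro rfl
          have := hPne y hy0; rw [hP0] at hxy; omega
        have hval : y.val = x.val + 1 := by
          have h1 := hPval x hx0; have h2 := hPval y hy0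
          have := hvalpos x hx0; have := hvalpos y hy0
          omega
        have hyx : y = x + 1 := by
          rw [← hcastval y, hval, Nat.cast_add, Nat.cast_one, hcastval x]
        exact hcons x hx0 ⟨hx, hyx ▸ hy⟩
    have hinjP : Set.InjOn (fun x => P x / 2) ↑S := by
      intro x hx y hy hxy
      by_contra hne
      have hx' : x ∈ S := hx
      have hy' : y ∈ S := hy
      have hPxy : P x ≠ P y := by
        intro h
        by_cases hx0 : x = 0 <;> by_cases hy0 : y = 0
        · exact hne (hx0.trans hy0.symm)
        · have := hPne y hy0; rw [hx0, hP0] at h; omega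
        · have := hPne x hx0; rw [hy0, hP0] at h; omega
        · have h1 := hPval x hx0; have h2 := hPval y hy0
          have := hvalpos x hx0; have := hvalpos y hy0
          have : x.val = y.val := by omega
          exact hne (by rw [← hcastval x, ← hcastval y, this])
      have hcase : P x + 1 = P y ∨ P y + 1 = P x := by
        simp only at hxy
        omega
      rcases hcase with h | h
      · exact key x y hx' hy' h
      · exact key y x hy' hx' h
    have himg : S.image (fun x => P x / 2) ⊆ Finset.range (r/2) := by
      intro t ht
      rcases Finset.mem_image.mp ht with ⟨x, hx, rfl⟩
      rw [Finset.mem_range]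
      have := hPle x
      omega
    calc S.card = (S.image (fun x => P x / 2)).card := (Finset.card_image_of_injOn hinjP).symm
      _ ≤ (Finset.range (r/2)).card := Finset.card_le_card himg
      _ = r / 2 := Finset.card_range _
  refine ⟨part1, part2, ?_⟩
  classical
  set A := Finset.univ.filter (fun v : Fin n => ∀ k, v ≠ c k) with hA
  set B := Finset.univ.filter (fun p : Fin n × ZMod (r - 1) =>
      (∀ k, p.1 ≠ c k) ∧ G.Adj p.1 (c p.2)) with hB
  have hfib : ∀ x ∈ B, x.1 ∈ A := by
    intro x hx
    rw [hA, Finset.mem_filter]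
    exact ⟨Finset.mem_univ _, (Finset.mem_filter.mp hx).2.1⟩
  have hAcard : A.card = n - (r-1) := by
    have hAeq : A = Finset.univ \ Finset.image c Finset.univ := by
      ext v
      simp only [hA, Finset.mem_filter, Finset.mem_univ, true_and, Finset.mem_sdiff,
        Finset.mem_image, not_exists]
      exact ⟨fun h k hk => h k hk.symm, fun h k hk => h k hk.symm⟩
    rw [hAeq, Finset.card_sdiff_of_subset (Finset.subset_univ _), Finset.card_univ,
      Finset.card_image_of_injective _ hinj, Finset.card_univ, ZMod.card, Fintype.card_fin]
  have hbound : ∀ v ∈ A, (B.filter fun x => x.1 = v).card ≤ r / 2 := by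
    intro v hv
    have hvnot : v ∉ Set.range c := by
      rintro ⟨k, hk⟩
      exact (Finset.mem_filter.mp hv).2 k hk.symm
    calc (B.filter fun x => x.1 = v).card
        ≤ (Finset.univ.filter fun k : ZMod (r-1) => G.Adj v (c k)).card := by
          apply Finset.card_le_card_of_injOn (fun x => x.2)
          · intro x hx
            simp only [hB, Finset.mem_coe, Finset.mem_filter, Finset.mem_univ, true_and] at hx ⊢
            obtain ⟨⟨_, hadj⟩, h1⟩ := hx
            exact h1 ▸ hadj
          · intro x hx y hy hxy
            have h1 := (Finset.mem_filter.mp hx).2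
            have h2 := (Finset.mem_filter.mp hy).2
            exact Prod.ext (h1.trans h2.symm) hxy
      _ ≤ r / 2 := part2 v hvnot
  calc B.card = ∑ v ∈ A, (B.filter fun x => x.1 = v).card :=
        Finset.card_eq_sum_card_fiberwise hfib
    _ ≤ ∑ _v ∈ A, r/2 := Finset.sum_le_sum hbound
    _ = A.card * (r/2) := by rw [Finset.sum_const, smul_eq_mul]
    _ ≤ (n+1-r) * (r/2) := by
        apply Nat.mul_le_mul_right
        omega
    _ = r/2 * (n+1-r) := mul_comm _ _
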